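/- arXiv:2410.17431 — 2 statements merged into one kernel-verified Lean document; each statement's English description precedes it below -/
import Mathlib

section
/- Let f : ℝⁿ → ℝ be differentiable and satisfy the Polyak–Łojasiewicz condition with constant μ > 0, i.e., for all x, (1/(2μ))‖∇f(x)‖² ≥ sup f − f(x). Then f satisfies quadratic growth: for any maximizer x* of f and any x, f(x*) − f(x) ≥ (μ/2)·d(x, argmax f)², where d(x, argmax f) is the distance from x to the set of maximizers. -/
open Metric Filter Topology

lemma descent {E : Type*} [MetricSpace E] [CompleteSpace E]
    (φ : E → ℝ) (hcont : Continuous φ) (hnn : ∀ x, 0 ≤ φ x)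
    {c c' : ℝ} (hc' : 0 < c') (hcc : c' < c)
    (H : ∀ y, 0 < φ y → ∀ δ > 0, ∃ z, 0 < dist z y ∧ dist z y < δ ∧ φ z ≤ φ y - c * dist z y)
    (x : E) : ∃ p, φ p = 0 ∧ dist x p ≤ φ x / c' := by
  classical
  set T : E → Set E := fun y => {z | φ z + c' * dist y z ≤ φ y} with hT
  have hyT : ∀ y, y ∈ T y := by intro y; simp [hT]
  have hbddA : ∀ y, BddAbove ((dist y) '' T y) := by
    intro y
    refine ⟨φ y / c', ?_⟩
    rintro r ⟨z, hz, rfl⟩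
    rw [le_div_iff₀ hc', mul_comm]
    have := hnn z
    simp only [hT, Set.mem_setOf_eq] at hz
    linarith
  set D : E → ℝ := fun y => sSup ((dist y) '' T y) with hD
  have hD0 : ∀ y, 0 ≤ D y := by
    intro y
    have : (0:ℝ) ∈ (dist y) '' T y := ⟨y, hyT y, by simp⟩
    exact le_csSup (hbddA y) this
  have hmemD : ∀ y z, z ∈ T y → dist y z ≤ D y := fun y z hz =>
    le_csSup (hbddA y) ⟨z, hz, rfl⟩
  have hstep : ∀ y, ∃ z, z ∈ T y ∧ D y / 2 ≤ dist y z := by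
    intro y
    rcases eq_or_lt_of_le (hD0 y) with h | h
    · exact ⟨y, hyT y, by simp [← h]⟩
    · have hne : ((dist y) '' T y).Nonempty := ⟨0, ⟨y, hyT y, by simp⟩⟩
      obtain ⟨r, hrmem, hr⟩ := exists_lt_of_lt_csSup hne (half_lt_self h)
      obtain ⟨z, hz, rfl⟩ := hrmem
      exact ⟨z, hz, hr.le⟩
  choose step hstepT hstepD using hstep
  set u : ℕ → E := fun n => step^[n] x with hu
  have hu0 : u 0 = x := rfl
  have husucc : ∀ n, u (n + 1) = step (u n) := fun n => Function.iterate_succ_apply' step n x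
  have key1 : ∀ n, φ (u (n + 1)) + c' * dist (u n) (u (n + 1)) ≤ φ (u n) := by
    intro n; rw [husucc n]; exact hstepT (u n)
  have key2 : ∀ n, D (u n) / 2 ≤ dist (u n) (u (n + 1)) := by
    intro n; rw [husucc n]; exact hstepD (u n)
  have hanti : Antitone fun n => φ (u n) := by
    refine antitone_nat_of_succ_le fun n => ?_
    have h1 := key1 n
    have h2 : 0 ≤ c' * dist (u n) (u (n + 1)) := by positivity
    linarith
  have distsum : ∀ m n, m ≤ n → c' * dist (u m) (u n) ≤ φ (u m) - φ (u n) := by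
    intro m n hmn
    induction n, hmn using Nat.le_induction with
    | base => simp
    | succ n hmn ih =>
      have h1 := key1 n
      have htri : dist (u m) (u (n + 1)) ≤ dist (u m) (u n) + dist (u n) (u (n + 1)) :=
        dist_triangle _ _ _
      have := mul_le_mul_of_nonneg_left htri hc'.le
      rw [mul_add] at this
      linarith
  set L : ℝ := ⨅ n, φ (u n) with hL
  have hbr : BddBelow (Set.range fun n => φ (u n)) := ⟨0, by rintro r ⟨n, rfl⟩; exact hnn _⟩
  have htendL : Tendsto (fun n => φ (u n)) atTop (𝓝 L) := tendsto_atTop_ciInf hanti hbr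
  have hgeL : ∀ n, L ≤ φ (u n) := fun n => ciInf_le hbr n
  have hL0 : 0 ≤ L := le_ciInf fun n => hnn _
  have hdb : ∀ {n m}, n ≤ m → dist (u n) (u m) ≤ (φ (u n) - φ (u m)) / c' := by
    intro n m h
    rw [le_div_iff₀ hc']
    have := distsum n m h
    nlinarith
  have hcauchy : CauchySeq u := by
    refine cauchySeq_of_le_tendsto_0 (fun N => (φ (u N) - L) / c') (fun n m N hn hm => ?_) ?_
    · have key : ∀ a b : ℕ, N ≤ a → a ≤ b → dist (u a) (u b) ≤ (φ (u N) - L) / c' := by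
        intro a b ha hab
        refine (hdb hab).trans ((div_le_div_iff_of_pos_right hc').mpr ?_)
        have := hanti ha
        have := hgeL b
        linarith [hanti ha, hgeL b]
      rcases le_total n m with h | h
      · exact key n m hn h
      · rw [dist_comm]; exact key m n hm h
    · have : Tendsto (fun N => (φ (u N) - L) / c') atTop (𝓝 ((L - L) / c')) :=
        ((htendL.sub tendsto_const_nhds).div_const c')
      simpa using this
  obtain ⟨p, hp⟩ := cauchySeq_tendsto_of_complete hcauchy
  have hφp : φ p = L := tendsto_nhds_unique ((hcont.continuousAt.tendsto.comp hp)) htendL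
  have hstep0 : Tendsto (fun n => dist (u n) (u (n + 1))) atTop (𝓝 0) := by
    have h1 : Tendsto (fun n => (φ (u n) - φ (u (n + 1))) / c') atTop (𝓝 ((L - L) / c')) :=
      (htendL.sub (htendL.comp (tendsto_add_atTop_nat 1))).div_const c'
    rw [sub_self, zero_div] at h1
    refine squeeze_zero (fun n => dist_nonneg) (fun n => hdb (Nat.le_succ n)) h1
  have hLzero : L = 0 := by
    by_contra hne
    have hLpos : 0 < L := lt_of_le_of_ne hL0 (Ne.symm hne)
    obtain ⟨z, hzpos, hzlt, hzdec⟩ := H p (hφp ▸ hLpos) 1 one_pos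
    set r := dist z p with hr
    set ε := min (r / 2) ((c - c') * r / c') with hε
    have hεpos : 0 < ε := by
      apply lt_min (by linarith)
      apply div_pos (mul_pos (by linarith) hzpos) hc'
    have hev1 : ∀ᶠ n in atTop, dist (u n) p < ε :=
      (hp (ball_mem_nhds p hεpos) : _)
    have hev2 : ∀ᶠ n in atTop, dist (u n) (u (n + 1)) < r / 4 := by
      have := hstep0 (Iio_mem_nhds (show (0:ℝ) < r/4 by linarith))
      filter_upwards [this] with n hn
      exact lt_of_le_of_lt (le_abs_self _) (by simpa [abs_of_nonneg dist_nonneg] using hn)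
    obtain ⟨k, h1, h2⟩ := (hev1.and hev2).exists
    have hzT : z ∈ T (u k) := by
      simp only [hT, Set.mem_setOf_eq]
      have htri : dist (u k) z ≤ r + dist (u k) p := by
        rw [hr, dist_comm z p]
        calc dist (u k) z ≤ dist (u k) p + dist p z := dist_triangle _ _ _
          _ = dist p z + dist (u k) p := by ring
      have hεle : ε ≤ (c - c') * r / c' := min_le_right _ _
      have h3 : c' * dist (u k) z ≤ c' * r + c' * ε := by nlinarith [h1, htri]
      have h4 : c' * ε ≤ (c - c') * r := by
        rw [← le_div_iff₀' hc'] at *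
        calc ε ≤ (c - c') * r / c' := hεle
          _ = (c - c') * r / c' := rfl
      have h5 := hgeL k
      have hzL : φ z ≤ L - c * r := by rw [← hφp]; exact hzdec
      linarith
    have hDlb : r / 2 ≤ D (u k) := by
      have := hmemD (u k) z hzT
      have htri2 : r - dist (u k) p ≤ dist (u k) z := by
        rw [hr, dist_comm z p]
        have := dist_triangle p (u k) z
        rw [dist_comm p (u k)] at this
        linarith
      have hεle2 : ε ≤ r / 2 := min_le_left _ _
      linarith
    have := key2 k
    linarith
  refine ⟨p, hφp.trans hLzero, ?_⟩
  have hdx : ∀ n, dist x (u n) ≤ φ x / c' := by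
    intro n
    have := hdb (Nat.zero_le n)
    rw [hu0] at this
    exact this.trans ((div_le_div_iff_of_pos_right hc').mpr (by linarith [hnn (u n)]))
  have : Tendsto (fun n => dist x (u n)) atTop (𝓝 (dist x p)) :=
    (continuous_const.dist continuous_id).continuousAt.tendsto.comp hp
  exact le_of_tendsto this (Eventually.of_forall hdx)

/-- PL condition implies quadratic growth. -/
theorem pl_implies_quadratic_growth {n : ℕ}
    (f : EuclideanSpace ℝ (Fin n) → ℝ) (μ : ℝ) (hμ : 0 < μ)
    (hdiff : Differentiable ℝ f)
    (hbdd : BddAbove (Set.range f))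
    (M : Set (EuclideanSpace ℝ (Fin n)))
    (hM : M = {x | ∀ y, f y ≤ f x})
    (hMne : M.Nonempty)
    (hPL : ∀ x, ‖gradient f x‖ ^ 2 ≥ 2 * μ * ((⨆ y, f y) - f x)) :
    ∀ xstar ∈ M, ∀ x, f xstar - f x ≥ μ / 2 * (infDist x M) ^ 2 := by
  intro xstar hxstar x
  set S : ℝ := ⨆ y, f y with hS
  have hfle : ∀ y, f y ≤ S := fun y => le_ciSup hbdd y
  have hxmax : ∀ y, f y ≤ f xstar := by rw [hM] at hxstar; exact hxstar
  have hfS : f xstar = S := le_antisymm (hfle xstar) (ciSup_le hxmax)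
  set φ : EuclideanSpace ℝ (Fin n) → ℝ := fun z => Real.sqrt (S - f z) with hφ
  have hφcont : Continuous φ := (continuous_const.sub hdiff.continuous).sqrt
  have hnn : ∀ z, 0 ≤ φ z := fun z => Real.sqrt_nonneg _
  set s : ℝ := Real.sqrt (μ / 2) with hsdef
  have hs : 0 < s := Real.sqrt_pos.mpr (by linarith)
  have hs2 : s ^ 2 = μ / 2 := Real.sq_sqrt (by linarith)
  have Hslope : ∀ c, 0 < c → c < s → ∀ y, 0 < φ y →
      ∀ δ > 0, ∃ z, 0 < dist z y ∧ dist z y < δ ∧ φ z ≤ φ y - c * dist z y := by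
    intro c hc hcs y hy δ hδ
    have hSfy : 0 < S - f y := Real.sqrt_pos.mp hy
    set g := gradient f y with hg
    have hg2 : ‖g‖ ^ 2 ≥ 2 * μ * (S - f y) := hPL y
    have hgpos : 0 < ‖g‖ := by nlinarith [norm_nonneg g]
    set v := ‖g‖⁻¹ • g with hv
    have hfd : HasFDerivAt f (InnerProductSpace.toDual ℝ _ g) y :=
      hasGradientAt_iff_hasFDerivAt.mp (hdiff y).hasGradientAt
    have hcurve : HasDerivAt (fun t : ℝ => y + t • v) v 0 := by
      simpa using ((hasDerivAt_id (0 : ℝ)).smul_const v).const_add y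
    have h1 : HasDerivAt (fun t : ℝ => f (y + t • v)) ‖g‖ 0 := by
      have hfd' : HasFDerivAt f (InnerProductSpace.toDual ℝ _ g)
          ((fun t : ℝ => y + t • v) 0) := by simpa using hfd
      have := hfd'.comp_hasDerivAt 0 hcurve
      have hval : (InnerProductSpace.toDual ℝ _ g) v = ‖g‖ := by
        rw [InnerProductSpace.toDual_apply_apply, hv, real_inner_smul_right,
          real_inner_self_eq_norm_sq]
        field_simp
      rwa [hval] at this
    have h2 : HasDerivAt (fun t : ℝ => S - f (y + t • v)) (-‖g‖) 0 := h1.const_sub S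
    have hsq : HasDerivAt Real.sqrt (1 / (2 * Real.sqrt (S - f y)))
        ((fun t : ℝ => S - f (y + t • v)) 0) := by
      have : (fun t : ℝ => S - f (y + t • v)) 0 = S - f y := by simp
      rw [this]
      exact Real.hasDerivAt_sqrt (ne_of_gt hSfy)
    have h3 : HasDerivAt (fun t : ℝ => φ (y + t • v))
        (1 / (2 * Real.sqrt (S - f y)) * -‖g‖) 0 := hsq.comp 0 h2
    have hd : 1 / (2 * Real.sqrt (S - f y)) * -‖g‖ ≤ -s := by
      have h6 : Real.sqrt (2 * μ * (S - f y)) ≤ ‖g‖ := by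
        rw [show ‖g‖ = Real.sqrt (‖g‖ ^ 2) from (Real.sqrt_sq (norm_nonneg g)).symm]
        exact Real.sqrt_le_sqrt hg2
      have h7 : Real.sqrt (2 * μ * (S - f y)) = 2 * s * Real.sqrt (S - f y) := by
        rw [show 2 * μ * (S - f y) = (2 * s) ^ 2 * (S - f y) by nlinarith,
          Real.sqrt_mul (by positivity), Real.sqrt_sq (by positivity)]
      have hr : 0 < Real.sqrt (S - f y) := hy
      rw [div_mul_eq_mul_div, one_mul, div_le_iff₀ (by positivity)]
      nlinarith
    have hslopelim := hasDerivAt_iff_tendsto_slope.mp h3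
    have hev : ∀ᶠ t in nhdsWithin (0:ℝ) (Set.Ioi 0),
        slope (fun t : ℝ => φ (y + t • v)) 0 t < -c := by
      have hIio : Set.Iio (-c) ∈ nhds (1 / (2 * Real.sqrt (S - f y)) * -‖g‖) :=
        Iio_mem_nhds (lt_of_le_of_lt hd (by linarith))
      have := hslopelim hIio
      exact nhdsWithin_mono (0:ℝ) (fun t ht => ne_of_gt ht) this
    have hev2 : ∀ᶠ t in nhdsWithin (0:ℝ) (Set.Ioi 0), t ∈ Set.Ioo (0:ℝ) δ :=
      Ioo_mem_nhdsGT_of_mem ⟨le_refl 0, hδ⟩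
    obtain ⟨t, hslope, ht0, htδ⟩ := (hev.and hev2).exists
    have hvnorm : ‖v‖ = 1 := by
      rw [hv, norm_smul, norm_inv, norm_norm, inv_mul_cancel₀ (ne_of_gt hgpos)]
    have hdistz : dist (y + t • v) y = t := by
      rw [dist_eq_norm, add_sub_cancel_left, norm_smul, hvnorm, mul_one,
        Real.norm_eq_abs, abs_of_pos ht0]
    refine ⟨y + t • v, by rw [hdistz]; exact ht0, by rw [hdistz]; exact htδ, ?_⟩
    rw [hdistz]
    rw [slope_def_field] at hslope
    have : (φ (y + t • v) - φ (y + (0:ℝ) • v)) / (t - 0) < -c := by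
      simpa using hslope
    have h0 : φ (y + (0:ℝ) • v) = φ y := by simp
    rw [h0, sub_zero, div_lt_iff₀ ht0] at this
    linarith
  have hkey : ∀ a, 0 < a → a < s → infDist x M ≤ φ x / a := by
    intro a ha has
    have hc1 : a < (a + s) / 2 := by linarith
    have hc2 : (a + s) / 2 < s := by linarith
    obtain ⟨p, hp0, hpd⟩ := descent φ hφcont hnn ha hc1
      (Hslope ((a + s) / 2) (by linarith) hc2) x
    have hfp : f p = S := by
      have h1 : 0 ≤ S - f p := by linarith [hfle p]
      have h2 : S - f p ≤ 0 := by
        by_contra h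
        exact absurd hp0 (ne_of_gt (Real.sqrt_pos.mpr (not_le.mp h)))
      linarith
    have hpM : p ∈ M := by
      rw [hM]
      intro y
      rw [hfp]
      exact hfle y
    exact le_trans (infDist_le_dist_of_mem hpM) hpd
  set I : ℝ := infDist x M with hI
  have hI0 : 0 ≤ I := infDist_nonneg
  have hsI : s * I ≤ φ x := by
    by_contra hlt
    push_neg at hlt
    have hIpos : 0 < I := by
      by_contra h
      push_neg at h
      have : I = 0 := le_antisymm h hI0
      rw [this, mul_zero] at hlt
      exact absurd hlt (not_lt.mpr (hnn x))
    have hq : 0 ≤ φ x / I := div_nonneg (hnn x) hI0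
    have ha1 : φ x / I < s := (div_lt_iff₀ hIpos).mpr (by nlinarith)
    set a := (φ x / I + s) / 2 with ha
    have hapos : 0 < a := by linarith
    have has : a < s := by linarith
    have h1 := hkey a hapos has
    rw [le_div_iff₀ hapos] at h1
    have h2 : φ x / I < a := by linarith
    rw [div_lt_iff₀ hIpos] at h2
    nlinarith
  have hSfx : 0 ≤ S - f x := by linarith [hfle x]
  have hsq2 : (s * I) ^ 2 ≤ (φ x) ^ 2 := by
    apply pow_le_pow_left₀ (by positivity) hsI
  rw [hφ] at hsq2
  rw [Real.sq_sqrt hSfx] at hsq2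
  have : (s * I) ^ 2 = μ / 2 * I ^ 2 := by rw [mul_pow, hs2]
  rw [this] at hsq2
  rw [hfS]
  linarith
end

section
/- Suppose g : ℝᵐ × ℝⁿ → ℝ is such that for each θ, φ ↦ g(θ, φ) satisfies the PL condition with constant μ > 0, and ∇_φ g is L-Lipschitz in θ uniformly in φ (i.e., ‖∇_φ g(θ₁, φ) − ∇_φ g(θ₂, φ)‖ ≤ L‖θ₁ − θ₂‖). Then for any θ₁, θ₂ and any maximizer φ₁ of g(θ₁, ·), there exists a maximizer φ₂ of g(θ₂, ·) with ‖φ₁ − φ₂‖ ≤ (L/μ)‖θ₁ − θ₂‖. -/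
open Metric Set Filter

/-- Ekeland-type descent lemma: under the PL condition with upper bound `M`,
from any point `x` there is a point `y` achieving the value `M` within
distance `√(M - f x) / c'` for any `0 < c' < √(2μ)/2`. -/
lemma pl_exists_near_max {n : ℕ} (f : EuclideanSpace ℝ (Fin n) → ℝ) (μ : ℝ) (hμ : 0 < μ)
    (hdiff : Differentiable ℝ f) (M : ℝ) (hub : ∀ ψ, f ψ ≤ M)
    (hPL : ∀ φ, ‖gradient f φ‖ ^ 2 ≥ 2 * μ * (M - f φ))
    (x : EuclideanSpace ℝ (Fin n)) (c' : ℝ) (hc'0 : 0 < c')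
    (hc' : c' < Real.sqrt (2 * μ) / 2) :
    ∃ y, f y = M ∧ ‖x - y‖ ≤ Real.sqrt (M - f x) / c' := by
  set h : EuclideanSpace ℝ (Fin n) → ℝ := fun z => Real.sqrt (M - f z) with hh_def
  have hFnn : ∀ z, 0 ≤ M - f z := fun z => sub_nonneg.2 (hub z)
  have hhnn : ∀ z, 0 ≤ h z := fun z => Real.sqrt_nonneg _
  have hcont : Continuous h :=
    Real.continuous_sqrt.comp (continuous_const.sub hdiff.continuous)
  -- the descent step
  have key : ∀ y, 0 < M - f y → ∃ z, h z + c' * ‖z - y‖ < h y := by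
    intro y hy
    set s := Real.sqrt (M - f y) with hs_def
    have hs : 0 < s := Real.sqrt_pos.2 hy
    set a := 1 / (2 * s) with ha_def
    have ha : 0 < a := by positivity
    set G := gradient f y with hG_def
    have hGnorm : Real.sqrt (2 * μ * (M - f y)) ≤ ‖G‖ := by
      have h1 := hPL y
      have h2 : Real.sqrt (2 * μ * (M - f y)) ≤ Real.sqrt (‖G‖ ^ 2) :=
        Real.sqrt_le_sqrt (by linarith)
      rwa [Real.sqrt_sq (norm_nonneg _)] at h2
    set v := a • G with hv_def
    have hvnorm : ‖v‖ = a * ‖G‖ := by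
      rw [hv_def, norm_smul, Real.norm_eq_abs, abs_of_pos ha]
    have hcv : c' < ‖v‖ := by
      have hsplit : Real.sqrt (2 * μ * (M - f y)) = Real.sqrt (2 * μ) * s := by
        rw [hs_def, Real.sqrt_mul (by positivity)]
      have h2 : a * (Real.sqrt (2 * μ) * s) = Real.sqrt (2 * μ) / 2 := by
        rw [ha_def]; field_simp
      have h3 : Real.sqrt (2 * μ) / 2 ≤ a * ‖G‖ := by
        rw [← h2]
        exact mul_le_mul_of_nonneg_left (by rw [← hsplit]; exact hGnorm) ha.le
      rw [hvnorm]; linarith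
    have hvpos : 0 < ‖v‖ := lt_trans hc'0 hcv
    -- derivative computations
    have hf' : HasFDerivAt f (InnerProductSpace.toDual ℝ _ G) y :=
      (hdiff y).hasGradientAt.hasFDerivAt
    have hF' : HasFDerivAt (fun z => M - f z) (-(InnerProductSpace.toDual ℝ _ G)) y :=
      hf'.const_sub M
    have hsq : HasDerivAt Real.sqrt a (M - f y) := by
      have := Real.hasDerivAt_sqrt hy.ne'
      rwa [← hs_def, ← ha_def] at this
    have hh' : HasFDerivAt h (a • -(InnerProductSpace.toDual ℝ _ G)) y :=
      hsq.comp_hasFDerivAt y hF'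
    have hγ : HasDerivAt (fun t : ℝ => y + t • v) v 0 := by
      have h1 : HasDerivAt (fun t : ℝ => t • v) ((1 : ℝ) • v) 0 :=
        (hasDerivAt_id (0 : ℝ)).smul_const v
      simpa using h1.const_add y
    have hγ0 : y + (0 : ℝ) • v = y := by simp
    have hψ : HasDerivAt (fun t : ℝ => h (y + t • v))
        ((a • -(InnerProductSpace.toDual ℝ _ G)) v) 0 := by
      have hh'' := hh'
      rw [← hγ0] at hh''
      exact hh''.comp_hasDerivAt (0 : ℝ) hγ
    have hval : (a • -(InnerProductSpace.toDual ℝ _ G)) v = -‖v‖ ^ 2 := by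
      have h1 : (InnerProductSpace.toDual ℝ _ G) v = inner ℝ G v := rfl
      have h2 : (inner ℝ G v : ℝ) = a * ‖G‖ ^ 2 := by
        rw [hv_def, real_inner_smul_right, real_inner_self_eq_norm_sq]
      rw [ContinuousLinearMap.smul_apply, ContinuousLinearMap.neg_apply, h1, h2, hvnorm,
        smul_eq_mul]
      ring
    rw [hval] at hψ
    rw [hasDerivAt_iff_tendsto_slope] at hψ
    have hψ' : Tendsto (slope (fun t : ℝ => h (y + t • v)) 0) (nhdsWithin 0 (Ioi 0))
        (nhds (-‖v‖ ^ 2)) :=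
      hψ.mono_left (nhdsWithin_mono _ (fun t ht => ne_of_gt ht))
    have hlt : -‖v‖ ^ 2 < -(c' * ‖v‖) := by nlinarith
    have hev : ∀ᶠ t in nhdsWithin (0 : ℝ) (Ioi 0),
        slope (fun t : ℝ => h (y + t • v)) 0 t < -(c' * ‖v‖) :=
      hψ'.eventually_lt_const hlt
    have hev2 : ∀ᶠ t in nhdsWithin (0 : ℝ) (Ioi 0), (0 : ℝ) < t := self_mem_nhdsWithin
    obtain ⟨t, hslope, ht⟩ := (hev.and hev2).exists
    refine ⟨y + t • v, ?_⟩
    have hnorm : ‖y + t • v - y‖ = t * ‖v‖ := by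
      rw [add_sub_cancel_left, norm_smul, Real.norm_eq_abs, abs_of_pos ht]
    have hslope' : (h (y + t • v) - h y) / t < -(c' * ‖v‖) := by
      have heq : slope (fun t : ℝ => h (y + t • v)) 0 t
          = (h (y + t • v) - h y) / t := by
        simp [slope_def_field]
      rwa [heq] at hslope
    have hlt2 : h (y + t • v) - h y < t * -(c' * ‖v‖) := by
      rw [div_lt_iff₀ ht] at hslope'
      linarith [hslope']
    rw [hnorm]; nlinarith
  -- minimize `h z + c' * ‖z - x‖` over a large closed ball
  rcases eq_or_lt_of_le (hFnn x) with hx0 | hx0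
  · refine ⟨x, by linarith, ?_⟩
    simp only [sub_self, norm_zero]
    positivity
  · set R := 2 * h x / c' with hR_def
    have hhx : 0 < h x := Real.sqrt_pos.2 hx0
    set φfun : EuclideanSpace ℝ (Fin n) → ℝ := fun z => h z + c' * ‖z - x‖ with hφ_def
    have hφcont : Continuous φfun :=
      hcont.add (continuous_const.mul ((continuous_id.sub continuous_const).norm))
    obtain ⟨y, hyK, hymin⟩ := (isCompact_closedBall x R).exists_isMinOn
      ⟨x, mem_closedBall_self (by positivity)⟩ hφcont.continuousOn
    have hφx : φfun x = h x := by simp [hφ_def]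
    have hφy : h y + c' * ‖y - x‖ ≤ h x := by
      have h1 : φfun y ≤ φfun x := hymin (mem_closedBall_self (by positivity))
      simpa [hφ_def] using h1
    have hyx : c' * ‖y - x‖ ≤ h x := by
      have := hhnn y; linarith
    have hfy : f y = M := by
      by_contra hne
      have hy : 0 < M - f y := lt_of_le_of_ne (hFnn y) (fun hc => hne (by linarith))
      obtain ⟨z, hz⟩ := key y hy
      have hhy : h y ≤ h x := by
        have := mul_nonneg hc'0.le (norm_nonneg (y - x)); linarith
      have hzy : c' * ‖z - y‖ < h x := by
        have := hhnn z; linarith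
      have htri : ‖z - x‖ ≤ ‖z - y‖ + ‖y - x‖ := by
        have := dist_triangle z y x
        simpa [dist_eq_norm] using this
      have hzball : z ∈ closedBall x R := by
        rw [mem_closedBall, dist_eq_norm]
        have h1 : ‖z - y‖ ≤ h x / c' := (le_div_iff₀' hc'0).2 hzy.le
        have h2 : ‖y - x‖ ≤ h x / c' := (le_div_iff₀' hc'0).2 hyx
        calc ‖z - x‖ ≤ ‖z - y‖ + ‖y - x‖ := htri
          _ ≤ h x / c' + h x / c' := add_le_add h1 h2
          _ = R := by rw [hR_def]; ring
      have hcontr := hymin hzball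
      have hφz : φfun z < φfun y := by
        have h1 : c' * ‖z - x‖ ≤ c' * ‖z - y‖ + c' * ‖y - x‖ := by
          have := mul_le_mul_of_nonneg_left htri hc'0.le
          linarith [this]
        have : φfun z = h z + c' * ‖z - x‖ := rfl
        have hy' : φfun y = h y + c' * ‖y - x‖ := rfl
        rw [this, hy']
        linarith
      exact absurd hcontr (not_le.2 hφz)
    refine ⟨y, hfy, ?_⟩
    have h1 : c' * ‖y - x‖ ≤ Real.sqrt (M - f x) := hyx
    rw [norm_sub_rev, le_div_iff₀ hc'0]
    linarith [h1]

set_option maxHeartbeats 1000000 in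
/-- Lipschitz stability of maximizers under the PL condition. -/
theorem maximizer_lipschitz_stability {m n : ℕ}
    (g : EuclideanSpace ℝ (Fin m) → EuclideanSpace ℝ (Fin n) → ℝ)
    (μ L : ℝ) (hμ : 0 < μ) (hL : 0 ≤ L)
    (hdiff : ∀ θ, Differentiable ℝ (g θ))
    (hattain : ∀ θ, ∃ φ, ∀ ψ, g θ ψ ≤ g θ φ)
    (hPL : ∀ θ φ, ‖gradient (g θ) φ‖ ^ 2 ≥ 2 * μ * ((⨆ ψ, g θ ψ) - g θ φ))
    (hLip : ∀ θ₁ θ₂ φ, ‖gradient (g θ₁) φ - gradient (g θ₂) φ‖ ≤ L * ‖θ₁ - θ₂‖) :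
    ∀ θ₁ θ₂ φ₁, (∀ ψ, g θ₁ ψ ≤ g θ₁ φ₁) →
      ∃ φ₂, (∀ ψ, g θ₂ ψ ≤ g θ₂ φ₂) ∧ ‖φ₁ - φ₂‖ ≤ (L / μ) * ‖θ₁ - θ₂‖ := by
  intro θ₁ θ₂ φ₁ hmax₁
  set M : ℝ := ⨆ ψ, g θ₂ ψ with hM_def
  obtain ⟨φs, hφs⟩ := hattain θ₂
  have hbdd : BddAbove (Set.range (g θ₂)) := ⟨g θ₂ φs, by rintro _ ⟨ψ, rfl⟩; exact hφs ψ⟩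
  have hub : ∀ ψ, g θ₂ ψ ≤ M := fun ψ => le_ciSup hbdd ψ
  have hMφs : g θ₂ φs = M := le_antisymm (hub φs) (ciSup_le hφs)
  -- gradient of g θ₁ vanishes at the maximizer φ₁
  have hloc : IsLocalMax (g θ₁) φ₁ := Filter.Eventually.of_forall hmax₁
  have hfd : fderiv ℝ (g θ₁) φ₁ = 0 := hloc.fderiv_eq_zero
  have hg1 : gradient (g θ₁) φ₁ = 0 := by
    rw [gradient, hfd, map_zero]
  have hgrad : ‖gradient (g θ₂) φ₁‖ ≤ L * ‖θ₁ - θ₂‖ := by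
    have := hLip θ₁ θ₂ φ₁
    rwa [hg1, zero_sub, norm_neg] at this
  set B : ℝ := L * ‖θ₁ - θ₂‖ with hB_def
  have hB0 : 0 ≤ B := mul_nonneg hL (norm_nonneg _)
  have hFbound : M - g θ₂ φ₁ ≤ B ^ 2 / (2 * μ) := by
    have h1 := hPL θ₂ φ₁
    have h2 : ‖gradient (g θ₂) φ₁‖ ^ 2 ≤ B ^ 2 :=
      pow_le_pow_left₀ (norm_nonneg _) hgrad 2
    rw [ge_iff_le] at h1
    rw [le_div_iff₀ (by positivity)]
    nlinarith
  -- the set of maximizers of g θ₂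
  set S : Set (EuclideanSpace ℝ (Fin n)) := {y | g θ₂ y = M} with hS_def
  have hSne : S.Nonempty := ⟨φs, hMφs⟩
  have hScl : IsClosed S := isClosed_eq (hdiff θ₂).continuous continuous_const
  set H : ℝ := Real.sqrt (M - g θ₂ φ₁) with hH_def
  have hH0 : 0 ≤ H := Real.sqrt_nonneg _
  set c : ℝ := Real.sqrt (2 * μ) / 2 with hc_def
  have hc0 : 0 < c := by
    rw [hc_def]
    have : 0 < Real.sqrt (2 * μ) := Real.sqrt_pos.2 (by positivity)
    linarith
  set d : ℝ := infDist φ₁ S with hd_def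
  have hd0 : 0 ≤ d := infDist_nonneg
  -- infDist bound for every c' < c
  have hinf : ∀ c', 0 < c' → c' < c → d ≤ H / c' := by
    intro c' h0 h1
    obtain ⟨y, hy, hdist⟩ := pl_exists_near_max (g θ₂) μ hμ (hdiff θ₂) M hub
      (hPL θ₂) φ₁ c' h0 (by rwa [← hc_def])
    have hyS : y ∈ S := hy
    calc d ≤ dist φ₁ y := infDist_le_dist_of_mem hyS
      _ = ‖φ₁ - y‖ := by rw [dist_eq_norm]
      _ ≤ H / c' := hdist
  -- pass to the limit c' → c
  have hdc : d * c ≤ H := by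
    by_contra hcon
    push_neg at hcon
    have hdpos : 0 < d := by
      by_contra hd'
      push_neg at hd'
      have : d = 0 := le_antisymm hd' hd0
      rw [this, zero_mul] at hcon
      exact absurd hcon (not_lt.2 hH0)
    have hHd : H / d < c := by rwa [div_lt_iff₀ hdpos, mul_comm]
    obtain ⟨c', hc'1, hc'2⟩ := exists_between hHd
    have hc'pos : 0 < c' := lt_of_le_of_lt (by positivity) hc'1
    have := hinf c' hc'pos hc'2
    rw [le_div_iff₀ hc'pos] at this
    rw [div_lt_iff₀ hdpos] at hc'1
    linarith
  -- nearest maximizer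
  obtain ⟨φ₂, hφ₂S, hφ₂d⟩ := hScl.exists_infDist_eq_dist hSne φ₁
  refine ⟨φ₂, fun ψ => by rw [show g θ₂ φ₂ = M from hφ₂S]; exact hub ψ, ?_⟩
  have hnd : ‖φ₁ - φ₂‖ = d := by rw [hd_def, hφ₂d, dist_eq_norm]
  rw [hnd]
  -- now conclude: d * c ≤ H, H² ≤ B²/(2μ), c = √(2μ)/2
  have hs2 : Real.sqrt (2 * μ) ^ 2 = 2 * μ := Real.sq_sqrt (by positivity)
  have hH2 : H ^ 2 ≤ B ^ 2 / (2 * μ) := by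
    rw [hH_def, Real.sq_sqrt (sub_nonneg.2 (hub φ₁))]
    exact hFbound
  have hdc2 : (d * c) ^ 2 ≤ H ^ 2 := pow_le_pow_left₀ (by positivity) hdc 2
  have hkey : d ^ 2 * μ ^ 2 ≤ B ^ 2 := by
    have hc2 : c ^ 2 = μ / 2 := by
      rw [hc_def, div_pow, hs2]; ring
    rw [mul_pow, hc2] at hdc2
    have h3 : d ^ 2 * (μ / 2) ≤ B ^ 2 / (2 * μ) := le_trans hdc2 hH2
    have h4 := mul_le_mul_of_nonneg_right h3 (by positivity : (0:ℝ) ≤ 2 * μ)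
    have h5 : B ^ 2 / (2 * μ) * (2 * μ) = B ^ 2 := by field_simp
    linarith [h4, h5]
  have hdmu : d * μ ≤ B := by
    nlinarith [mul_nonneg hd0 hμ.le]
  rw [div_mul_eq_mul_div, le_div_iff₀ hμ]
  rw [hB_def] at hdmu
  linarith
end
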